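/- arXiv:1205.0609 — 3 statements merged into one kernel-verified Lean document; each statement's English description precedes it below -/
import Mathlib

section
/- Let F : ℕ × ℕ × ℂ → ℂ and let p, q ∈ ℂ be such that for all positive integers a, b and all s ∈ ℂ, F(a,b,s) = p·F(a-1,b,s+1) + q·F(a,b-1,s+1). Then for all positive integers a, b and all s ∈ ℂ, F(a,b,s) = ∑_{j=1}^{b} p^a q^{b-j} C(a+b-j-1, a-1) F(0,j,a+b+s-j) + ∑_{j=1}^{a} p^{a-j} q^{b} C(a+b-j-1, b-1) F(j,0,a+b+s-j). -/
theorem lemma_2_1 (F : ℕ → ℕ → ℂ → ℂ) (p q : ℂ)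
    (hF : ∀ a b : ℕ, 1 ≤ a → 1 ≤ b → ∀ s : ℂ,
      F a b s = p * F (a - 1) b (s + 1) + q * F a (b - 1) (s + 1)) :
    ∀ a b : ℕ, 1 ≤ a → 1 ≤ b → ∀ s : ℂ,
      F a b s =
        (∑ j ∈ Finset.Icc 1 b, p ^ a * q ^ (b - j) *
          (Nat.choose (a + b - j - 1) (a - 1) : ℂ) * F 0 j ((a : ℂ) + b + s - j)) +
        (∑ j ∈ Finset.Icc 1 a, p ^ (a - j) * q ^ b *
          (Nat.choose (a + b - j - 1) (b - 1) : ℂ) * F j 0 ((a : ℂ) + b + s - j)) := by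
  suffices key : ∀ n a b : ℕ, a + b = n → 1 ≤ a → 1 ≤ b → ∀ s : ℂ,
      F a b s =
        (∑ j ∈ Finset.Icc 1 b, p ^ a * q ^ (b - j) *
          (Nat.choose (a + b - j - 1) (a - 1) : ℂ) * F 0 j ((a : ℂ) + b + s - j)) +
        (∑ j ∈ Finset.Icc 1 a, p ^ (a - j) * q ^ b *
          (Nat.choose (a + b - j - 1) (b - 1) : ℂ) * F j 0 ((a : ℂ) + b + s - j)) by
    intro a b ha hb s; exact key (a + b) a b rfl ha hb s
  intro n
  induction n using Nat.strong_induction_on with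
  | _ n ih =>
  rintro a b rfl ha hb s
  match a, b with
  | 1, 1 =>
    rw [hF 1 1 le_rfl le_rfl s]
    simp only [Finset.Icc_self, Finset.sum_singleton]
    norm_num
    rw [show (2:ℂ) + s - 1 = s + 1 from by ring]
  | 1, B + 2 =>
      have r1 : (1 : ℕ) - 1 = 0 := rfl
      have r2 : B + 2 - 1 = B + 1 := by omega
      rw [hF 1 (B + 2) le_rfl (by omega) s, r1, r2,
        ih (1 + (B + 1)) (by omega) 1 (B + 1) rfl le_rfl (by omega) (s + 1)]
      rw [Finset.sum_Icc_succ_top (by omega : 1 ≤ B + 2)]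
      push_cast
      simp only [Nat.choose_zero_right, r1, r2, Nat.cast_one]
      have h1 : (∑ x ∈ Finset.Icc 1 (B+1), p ^ 1 * q ^ (B + 2 - x) * 1 * F 0 x (1 + ((B:ℂ) + 2) + s - ↑x))
          = q * ∑ x ∈ Finset.Icc 1 (B+1), p ^ 1 * q ^ (B + 1 - x) * 1 * F 0 x (1 + ((B:ℂ) + 1) + (s + 1) - ↑x) := by
        rw [Finset.mul_sum]
        refine Finset.sum_congr rfl fun x hx => ?_
        simp only [Finset.mem_Icc] at hx
        have e1 : B + 2 - x = (B + 1 - x) + 1 := by omega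
        have e2 : (1 : ℂ) + ((B:ℂ) + 1) + (s + 1) - (x:ℂ) = 1 + ((B:ℂ) + 2) + s - (x:ℂ) := by ring
        rw [e1, e2, pow_succ]; ring
      have h2 : (∑ x ∈ Finset.Icc 1 1, p ^ (1 - x) * q ^ (B + 2) * ((Nat.choose (1 + (B+2) - x - 1) (B+1) : ℕ) : ℂ) * F x 0 (1 + ((B:ℂ)+2) + s - ↑x))
          = q * ∑ x ∈ Finset.Icc 1 1, p ^ (1 - x) * q ^ (B + 1) * ((Nat.choose (1 + (B+1) - x - 1) B : ℕ) : ℂ) * F x 0 (1 + ((B:ℂ)+1) + (s+1) - ↑x) := by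
        simp only [Finset.Icc_self, Finset.sum_singleton]
        have e3 : 1 + (B+2) - 1 - 1 = B + 1 := by omega
        have e4 : 1 + (B+1) - 1 - 1 = B := by omega
        have e5 : (1:ℂ) + ((B:ℂ)+1) + (s+1) - ((1:ℕ):ℂ) = 1 + ((B:ℂ)+2) + s - ((1:ℕ):ℂ) := by push_cast; ring
        rw [e3, e4, e5, Nat.choose_self, Nat.choose_self]; ring
      have h3 : p ^ 1 * q ^ (B - B) * 1 * F 0 (B + 1 + 1) (1 + ((B:ℂ) + 2) + s - ((B:ℂ) + 1 + 1)) = p * F 0 (B + 2) (s + 1) := by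
        have e6 : (1:ℂ) + ((B:ℂ)+2) + s - ((B:ℂ)+1+1) = s + 1 := by ring
        rw [e6, Nat.sub_self, show B+1+1 = B+2 from rfl]; norm_num
      rw [h1, h2, h3]; ring
  | A + 2, 1 =>
      have r1 : (1 : ℕ) - 1 = 0 := rfl
      have r2 : A + 2 - 1 = A + 1 := by omega
      rw [hF (A + 2) 1 (by omega) le_rfl s, r1, r2,
        ih ((A + 1) + 1) (by omega) (A + 1) 1 rfl (by omega) le_rfl (s + 1)]
      rw [Finset.sum_Icc_succ_top (by omega : 1 ≤ A + 2)]
      push_cast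
      simp only [Nat.choose_zero_right, r1, r2, Nat.cast_one]
      have h1 : (∑ x ∈ Finset.Icc 1 (A+1), p ^ (A + 2 - x) * q ^ 1 * 1 * F x 0 ((A:ℂ) + 2 + 1 + s - ↑x))
          = p * ∑ x ∈ Finset.Icc 1 (A+1), p ^ (A + 1 - x) * q ^ 1 * 1 * F x 0 ((A:ℂ) + 1 + 1 + (s + 1) - ↑x) := by
        rw [Finset.mul_sum]
        refine Finset.sum_congr rfl fun x hx => ?_
        simp only [Finset.mem_Icc] at hx
        have e1 : A + 2 - x = (A + 1 - x) + 1 := by omega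
        have e2 : (A:ℂ) + 1 + 1 + (s + 1) - (x:ℂ) = (A:ℂ) + 2 + 1 + s - (x:ℂ) := by ring
        rw [e1, e2, pow_succ]; ring
      have h2 : (∑ x ∈ Finset.Icc 1 1, p ^ (A + 2) * q ^ (1 - x) * ((Nat.choose ((A+2) + 1 - x - 1) (A+1) : ℕ) : ℂ) * F 0 x ((A:ℂ) + 2 + 1 + s - ↑x))
          = p * ∑ x ∈ Finset.Icc 1 1, p ^ (A + 1) * q ^ (1 - x) * ((Nat.choose ((A+1) + 1 - x - 1) A : ℕ) : ℂ) * F 0 x ((A:ℂ) + 1 + 1 + (s+1) - ↑x) := by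
        simp only [Finset.Icc_self, Finset.sum_singleton]
        have e3 : (A+2) + 1 - 1 - 1 = A + 1 := by omega
        have e4 : (A+1) + 1 - 1 - 1 = A := by omega
        have e5 : (A:ℂ) + 1 + 1 + (s+1) - ((1:ℕ):ℂ) = (A:ℂ) + 2 + 1 + s - ((1:ℕ):ℂ) := by push_cast; ring
        rw [e3, e4, e5, Nat.choose_self, Nat.choose_self]; ring
      have h3 : p ^ (A - A) * q ^ 1 * 1 * F (A + 1 + 1) 0 ((A:ℂ) + 2 + 1 + s - ((A:ℂ) + 1 + 1)) = q * F (A + 2) 0 (s + 1) := by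
        have e6 : (A:ℂ) + 2 + 1 + s - ((A:ℂ)+1+1) = s + 1 := by ring
        rw [e6, Nat.sub_self, show A+1+1 = A+2 from rfl]; norm_num
      rw [h1, h2, h3]; ring
  | A + 2, B + 2 =>
      have r2a : A + 2 - 1 = A + 1 := by omega
      have r2b : B + 2 - 1 = B + 1 := by omega
      rw [hF (A + 2) (B + 2) (by omega) (by omega) s, r2a, r2b,
        ih ((A + 1) + (B + 2)) (by omega) (A + 1) (B + 2) rfl (by omega) (by omega) (s + 1),
        ih ((A + 2) + (B + 1)) (by omega) (A + 2) (B + 1) rfl (by omega) (by omega) (s + 1)]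
      push_cast

      have hQ1 : (∑ x ∈ Finset.Icc 1 (B + 1),
            p ^ (A + 2) * q ^ (B + 1 - x) * ((Nat.choose (A + 2 + (B + 1) - x - 1) (A + 1) : ℕ) : ℂ) *
              F 0 x ((A:ℂ) + 2 + ((B:ℂ) + 1) + (s + 1) - ↑x))
          = (∑ x ∈ Finset.Icc 1 (B + 2),
            p ^ (A + 2) * q ^ (B + 1 - x) * ((Nat.choose (A + 2 + (B + 1) - x - 1) (A + 1) : ℕ) : ℂ) *
              F 0 x ((A:ℂ) + 2 + ((B:ℂ) + 1) + (s + 1) - ↑x)) := by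
        rw [Finset.sum_Icc_succ_top (by omega : 1 ≤ B + 2)]
        rw [show A + 2 + (B + 1) - (B + 1 + 1) - 1 = A from by omega,
          Nat.choose_eq_zero_of_lt (by omega)]
        norm_num
      have hP2 : (∑ x ∈ Finset.Icc 1 (A + 1),
            p ^ (A + 1 - x) * q ^ (B + 2) * ((Nat.choose (A + 1 + (B + 2) - x - 1) (B + 1) : ℕ) : ℂ) *
              F x 0 ((A:ℂ) + 1 + ((B:ℂ) + 2) + (s + 1) - ↑x))
          = (∑ x ∈ Finset.Icc 1 (A + 2),
            p ^ (A + 1 - x) * q ^ (B + 2) * ((Nat.choose (A + 1 + (B + 2) - x - 1) (B + 1) : ℕ) : ℂ) *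
              F x 0 ((A:ℂ) + 1 + ((B:ℂ) + 2) + (s + 1) - ↑x)) := by
        rw [Finset.sum_Icc_succ_top (by omega : 1 ≤ A + 2)]
        rw [show A + 1 + (B + 2) - (A + 1 + 1) - 1 = B from by omega,
          Nat.choose_eq_zero_of_lt (by omega)]
        norm_num
      rw [hQ1, hP2, mul_add, mul_add, Finset.mul_sum, Finset.mul_sum, Finset.mul_sum, Finset.mul_sum]
      rw [show ∀ x1 x2 y1 y2 : ℂ, x1 + x2 + (y1 + y2) = (x1 + y1) + (x2 + y2) from by intros; ring]
      congr 1
      · rw [← Finset.sum_add_distrib]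
        refine Finset.sum_congr rfl fun x hx => ?_
        simp only [Finset.mem_Icc] at hx
        have e2 : (A:ℂ) + 1 + ((B:ℂ) + 2) + (s + 1) - (x:ℂ) = (A:ℂ) + 2 + ((B:ℂ) + 2) + s - (x:ℂ) := by ring
        have e3 : (A:ℂ) + 2 + ((B:ℂ) + 1) + (s + 1) - (x:ℂ) = (A:ℂ) + 2 + ((B:ℂ) + 2) + s - (x:ℂ) := by ring
        rw [e2, e3]
        rcases Nat.lt_or_ge x (B + 2) with hlt | hge
        · have e1 : B + 2 - x = (B + 1 - x) + 1 := by omega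
          have epas : (A + 2 + (B + 2) - x - 1).choose (A + 1)
              = (A + 1 + (B + 2) - x - 1).choose A + (A + 2 + (B + 1) - x - 1).choose (A + 1) := by
            rw [show A + 2 + (B + 2) - x - 1 = (A + 1 + (B + 2) - x - 1) + 1 from by omega,
              show A + 2 + (B + 1) - x - 1 = A + 1 + (B + 2) - x - 1 from by omega]
            exact Nat.choose_succ_succ _ _
          rw [e1, epas, pow_succ]
          push_cast
          ring
        · have hxe : x = B + 2 := by omega
          subst hxe
          rw [show A + 2 + (B + 1) - (B + 2) - 1 = A from by omega,
            Nat.choose_eq_zero_of_lt (by omega : A < A + 1),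
            show A + 2 + (B + 2) - (B + 2) - 1 = A + 1 from by omega,
            show A + 1 + (B + 2) - (B + 2) - 1 = A from by omega,
            show B + 2 - (B + 2) = 0 from by omega,
            Nat.choose_self, Nat.choose_self]
          push_cast
          ring
      · rw [← Finset.sum_add_distrib]
        refine Finset.sum_congr rfl fun x hx => ?_
        simp only [Finset.mem_Icc] at hx
        have e2 : (A:ℂ) + 1 + ((B:ℂ) + 2) + (s + 1) - (x:ℂ) = (A:ℂ) + 2 + ((B:ℂ) + 2) + s - (x:ℂ) := by ring
        have e3 : (A:ℂ) + 2 + ((B:ℂ) + 1) + (s + 1) - (x:ℂ) = (A:ℂ) + 2 + ((B:ℂ) + 2) + s - (x:ℂ) := by ring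
        rw [e2, e3]
        rcases Nat.lt_or_ge x (A + 2) with hlt | hge
        · have e1 : A + 2 - x = (A + 1 - x) + 1 := by omega
          have epas : (A + 2 + (B + 2) - x - 1).choose (B + 1)
              = (A + 2 + (B + 1) - x - 1).choose B + (A + 1 + (B + 2) - x - 1).choose (B + 1) := by
            rw [show A + 2 + (B + 2) - x - 1 = (A + 2 + (B + 1) - x - 1) + 1 from by omega,
              show A + 1 + (B + 2) - x - 1 = A + 2 + (B + 1) - x - 1 from by omega]
            exact Nat.choose_succ_succ _ _
          rw [e1, epas, pow_succ]
          push_cast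
          ring
        · have hxe : x = A + 2 := by omega
          subst hxe
          rw [show A + 1 + (B + 2) - (A + 2) - 1 = B from by omega,
            Nat.choose_eq_zero_of_lt (by omega : B < B + 1),
            show A + 2 + (B + 2) - (A + 2) - 1 = B + 1 from by omega,
            show A + 2 + (B + 1) - (A + 2) - 1 = B from by omega,
            Nat.choose_self, Nat.choose_self, show B + 2 = (B + 1) + 1 from rfl, pow_succ]
          push_cast
          ring
end

section
/- For positive integers a, b, c with a ≥ 2, b ≥ 2, c ≥ 2 (ensuring absolute convergence), the Mordell–Tornheim/Witten sum ζ_{sl(3)}(a,b,c) := ∑_{m,n ≥ 1} 1/(m^a n^b (m+n)^c) satisfies ζ_{sl(3)}(a,b,c) = ∑_{j=1}^{a} C(a+b-j-1, b-1) ζ(a+b+c-j, j) + ∑_{j=1}^{b} C(a+b-j-1, a-1) ζ(a+b+c-j, j), where ζ(s,t) = ∑_{m > n ≥ 1} 1/(m^s n^t) is the double Euler sum. -/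
open Finset

/-- Witten zeta function of sl(3) (Tornheim double sum). -/
noncomputable def wittenSl3 (a b c : ℕ) : ℝ :=
  ∑' (m : ℕ) (n : ℕ), 1 / ((m + 1 : ℝ) ^ a * (n + 1 : ℝ) ^ b * (m + n + 2 : ℝ) ^ c)

/-- Double Euler sum ζ(s,t) = ∑_{m>n≥1} m^{-s} n^{-t}. -/
noncomputable def doubleZeta (s t : ℕ) : ℝ :=
  ∑' (n : ℕ) (k : ℕ), 1 / ((n + k + 2 : ℝ) ^ s * (n + 1 : ℝ) ^ t)

private lemma term_eq (x s : ℝ) {c1 c2 k1 k2 m1 m2 : ℕ} (hc : c1 = c2) (hk : k1 = k2)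
    (hm : m1 = m2) : (c1:ℝ)/(x^k1 * s^m1) = (c2:ℝ)/(x^k2*s^m2) := by
  subst hc; subst hk; subst hm; rfl

private lemma term_eq' (x s : ℝ) (c : ℝ) {k1 k2 m1 m2 : ℕ} (hk : k1 = k2)
    (hm : m1 = m2) : c/(x^k1 * s^m1) = c/(x^k2*s^m2) := by
  subst hk; subst hm; rfl

private lemma div_succ (s x : ℝ) (c : ℝ) (k m : ℕ) :
    (1/s) * (c/(x^k * s^m)) = c/(x^k * s^(m+1)) := by
  rw [div_mul_div_comm, one_mul]
  congr 1
  ring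

private lemma pf_combine (x s : ℝ) (a b : ℕ) :
    ∑ i ∈ range (a+1+1), ((b+1+i).choose i : ℝ) / (x^(a+1+1-i) * s^(b+1+1+i)) =
      (∑ i ∈ range (a+1), ((b+1+i).choose i : ℝ) / (x^(a+1-i) * s^(b+1+1+i+1))) +
      ∑ i ∈ range (a+1+1), ((b+i).choose i : ℝ) / (x^(a+1+1-i) * s^(b+1+i+1)) := by
  rw [Finset.sum_range_succ' (fun i => ((b+1+i).choose i : ℝ) / (x^(a+1+1-i) * s^(b+1+1+i))) (a+1),
      Finset.sum_range_succ' (fun i => ((b+i).choose i : ℝ) / (x^(a+1+1-i) * s^(b+1+i+1))) (a+1)]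
  have split : ∀ i ∈ range (a+1),
      ((b+1+(i+1)).choose (i+1) : ℝ) / (x^(a+1+1-(i+1)) * s^(b+1+1+(i+1))) =
        ((b+1+i).choose i : ℝ)/(x^(a+1-i)*s^(b+1+1+i+1)) +
        ((b+(i+1)).choose (i+1) : ℝ)/(x^(a+1+1-(i+1))*s^(b+1+(i+1)+1)) := by
    intro i _
    have h1 : (b+1+(i+1)).choose (i+1) = (b+1+i).choose i + (b+(i+1)).choose (i+1) := by
      rw [show b+1+(i+1) = (b+1+i)+1 by omega, show b+(i+1) = b+1+i by omega]
      exact Nat.choose_succ_succ _ _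
    rw [h1]
    push_cast
    rw [add_div]
    exact congrArg₂ (· + ·) (term_eq x s rfl (by omega) (by omega))
      (term_eq x s rfl rfl (by omega))
  rw [Finset.sum_congr rfl split, Finset.sum_add_distrib]
  have h0 : ((b+1+0).choose 0 : ℝ) / (x^(a+1+1-0) * s^(b+1+1+0)) =
      ((b+0).choose 0 : ℝ) / (x^(a+1+1-0) * s^(b+1+0+1)) := by norm_num
  rw [h0]
  ring

private lemma key_edge (x y : ℝ) (hx : x ≠ 0) (hy : y ≠ 0) (hs : x + y ≠ 0) :
    ∀ b : ℕ, 1/(x * y^(b+1)) =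
      1/(x*(x+y)^(b+1)) + ∑ i ∈ range (b+1), 1/(y^(b+1-i)*(x+y)^(1+i)) := by
  intro b
  induction b with
  | zero =>
    rw [Finset.sum_range_one]
    norm_num
    field_simp
    ring
  | succ b ih =>
    rw [Finset.sum_range_succ' (fun i => 1/(y^(b+1+1-i)*(x+y)^(1+i))) (b+1)]
    have l1 : ∀ i ∈ range (b+1), (1:ℝ)/(y^(b+1+1-(i+1))*(x+y)^(1+(i+1)))
        = (1/(x+y)) * (1/(y^(b+1-i)*(x+y)^(1+i))) := by
      intro i _
      rw [div_succ]
      exact term_eq' y (x+y) 1 (by omega) (by omega)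
    rw [Finset.sum_congr rfl l1, ← Finset.mul_sum]
    have hsum : ∑ i ∈ range (b+1), 1/(y^(b+1-i)*(x+y)^(1+i))
        = 1/(x * y^(b+1)) - 1/(x*(x+y)^(b+1)) := by rw [ih]; ring
    rw [hsum]
    simp only [Nat.sub_zero]
    field_simp
    ring

private lemma key (x y : ℝ) (hx : x ≠ 0) (hy : y ≠ 0) (hs : x + y ≠ 0) :
    ∀ a b : ℕ, 1/(x^(a+1)*y^(b+1)) =
      ∑ i ∈ range (a+1), ((b+i).choose i : ℝ)/(x^(a+1-i)*(x+y)^(b+1+i)) +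
      ∑ i ∈ range (b+1), ((a+i).choose i : ℝ)/(y^(b+1-i)*(x+y)^(a+1+i)) := by
  intro a
  induction a with
  | zero =>
    intro b
    simp only [Nat.zero_add, Nat.add_zero, Finset.sum_range_one, Nat.choose_self,
      Nat.choose_zero_right, Nat.cast_one, Nat.sub_zero, pow_one]
    exact key_edge x y hx hy hs b
  | succ a iha =>
    intro b
    induction b with
    | zero =>
      have h := key_edge y x hy hx (by rwa [add_comm]) (a+1)
      rw [add_comm y x] at h
      simp only [Nat.zero_add, Nat.add_zero, Finset.sum_range_one, Nat.choose_self,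
        Nat.choose_zero_right, Nat.cast_one, Nat.sub_zero, pow_one]
      rw [mul_comm (x^(a+1+1)) y, h]
      exact add_comm _ _
    | succ b ihb =>
      rw [pf_combine x (x+y) a b, pf_combine y (x+y) b a]
      have t1 : ∑ i ∈ range (a+1), ((b+1+i).choose i : ℝ) / (x^(a+1-i) * (x+y)^(b+1+1+i+1))
          = (1/(x+y)) * ∑ i ∈ range (a+1), ((b+1+i).choose i : ℝ) / (x^(a+1-i) * (x+y)^(b+1+1+i)) := by
        rw [Finset.mul_sum]
        exact Finset.sum_congr rfl fun i _ => (div_succ (x+y) x _ _ _).symm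
      have t2 : ∑ i ∈ range (a+1+1), ((b+i).choose i : ℝ) / (x^(a+1+1-i) * (x+y)^(b+1+i+1))
          = (1/(x+y)) * ∑ i ∈ range (a+1+1), ((b+i).choose i : ℝ) / (x^(a+1+1-i) * (x+y)^(b+1+i)) := by
        rw [Finset.mul_sum]
        exact Finset.sum_congr rfl fun i _ => (div_succ (x+y) x _ _ _).symm
      have t3 : ∑ i ∈ range (b+1), ((a+1+i).choose i : ℝ) / (y^(b+1-i) * (x+y)^(a+1+1+i+1))
          = (1/(x+y)) * ∑ i ∈ range (b+1), ((a+1+i).choose i : ℝ) / (y^(b+1-i) * (x+y)^(a+1+1+i)) := by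
        rw [Finset.mul_sum]
        exact Finset.sum_congr rfl fun i _ => (div_succ (x+y) y _ _ _).symm
      have t4 : ∑ i ∈ range (b+1+1), ((a+i).choose i : ℝ) / (y^(b+1+1-i) * (x+y)^(a+1+i+1))
          = (1/(x+y)) * ∑ i ∈ range (b+1+1), ((a+i).choose i : ℝ) / (y^(b+1+1-i) * (x+y)^(a+1+i)) := by
        rw [Finset.mul_sum]
        exact Finset.sum_congr rfl fun i _ => (div_succ (x+y) y _ _ _).symm
      rw [t1, t2, t3, t4]
      have hiha := iha (b+1)
      have hihb := ihb
      have hrec : 1/(x^(a+1+1)*y^(b+1+1)) =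
          (1/(x+y)) * (1/(x^(a+1)*y^(b+1+1))) + (1/(x+y)) * (1/(x^(a+1+1)*y^(b+1))) := by
        field_simp
        ring
      rw [hrec, hiha, hihb]
      ring

private lemma icc_range (n : ℕ) (φ : ℕ → ℝ) :
    ∑ j ∈ Finset.Icc 1 n, φ j = ∑ i ∈ Finset.range n, φ (n - i) := by
  rw [← Finset.Ico_add_one_right_eq_Icc, Finset.sum_Ico_eq_sum_range, ← Finset.sum_range_reflect]
  refine Finset.sum_congr (by simp) fun i hi => ?_
  simp only [Finset.mem_range] at hi
  congr 1
  omega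

private lemma base_sq : Summable fun n : ℕ => 1/((n:ℝ)+1)^2 := by
  have h := (Real.summable_one_div_nat_pow (p := 2)).mpr one_lt_two
  have := (summable_nat_add_iff (f := fun n : ℕ => 1/(n:ℝ)^2) 1).mpr h
  convert this using 2 with n
  · rfl
  · push_cast; ring

private lemma summable_base : Summable fun p : ℕ × ℕ => 1/((p.1:ℝ)+1)^2 * (1/((p.2:ℝ)+1)^2) := by
  have := Summable.mul_of_nonneg base_sq base_sq ?_ ?_
  · exact this
  · intro n; positivity
  · intro n; positivity

private lemma aux_core (u v z : ℝ) (hu : 1 ≤ u) (hv : 1 ≤ v) (hz : 1 ≤ z) {s : ℕ}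
    (hs : 4 ≤ s) : 1/((u+v)^s * z) ≤ 1/u^2 * (1/v^2) := by
  rw [one_div_mul_one_div]
  apply one_div_le_one_div_of_le (by positivity)
  have w1 : (1:ℝ) ≤ u + v := by linarith
  have h4 : (u+v)^4 ≤ (u+v)^s := pow_le_pow_right₀ w1 hs
  have huv : u^2 * v^2 ≤ (u+v)^4 := by
    nlinarith [sq_nonneg (u-v), sq_nonneg (u+v),
      mul_pos (show (0:ℝ) < u by linarith) (show (0:ℝ) < v by linarith)]
  calc u^2*v^2 ≤ (u+v)^4 := huv
    _ = (u+v)^4 * 1 := by ring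
    _ ≤ (u+v)^s * z := mul_le_mul h4 hz zero_le_one (by positivity)

private noncomputable def Ffun (a b c : ℕ) : ℕ×ℕ → ℝ :=
  fun p => 1/(((p.1:ℝ)+1)^a * ((p.2:ℝ)+1)^b * ((p.1:ℝ)+(p.2:ℝ)+2)^c)

private noncomputable def Gfun (s t : ℕ) : ℕ×ℕ → ℝ :=
  fun p => 1/(((p.1:ℝ)+(p.2:ℝ)+2)^s * ((p.1:ℝ)+1)^t)

private noncomputable def Hfun (s t : ℕ) : ℕ×ℕ → ℝ :=
  fun p => 1/(((p.1:ℝ)+(p.2:ℝ)+2)^s * ((p.2:ℝ)+1)^t)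

private lemma bound_G (s t : ℕ) (hs : 4 ≤ s) (p : ℕ×ℕ) :
    Gfun s t p ≤ 1/((p.1:ℝ)+1)^2 * (1/((p.2:ℝ)+1)^2) := by
  unfold Gfun
  rw [show ((p.1:ℝ)+(p.2:ℝ)+2) = ((p.1:ℝ)+1)+((p.2:ℝ)+1) by ring]
  have h1 : (1:ℝ) ≤ (p.1:ℝ)+1 := by have := Nat.cast_nonneg (α := ℝ) p.1; linarith
  have h2 : (1:ℝ) ≤ (p.2:ℝ)+1 := by have := Nat.cast_nonneg (α := ℝ) p.2; linarith
  exact aux_core _ _ _ h1 h2 (one_le_pow₀ h1) hs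

private lemma bound_H (s t : ℕ) (hs : 4 ≤ s) (p : ℕ×ℕ) :
    Hfun s t p ≤ 1/((p.1:ℝ)+1)^2 * (1/((p.2:ℝ)+1)^2) := by
  unfold Hfun
  rw [show ((p.1:ℝ)+(p.2:ℝ)+2) = ((p.1:ℝ)+1)+((p.2:ℝ)+1) by ring]
  have h1 : (1:ℝ) ≤ (p.1:ℝ)+1 := by have := Nat.cast_nonneg (α := ℝ) p.1; linarith
  have h2 : (1:ℝ) ≤ (p.2:ℝ)+1 := by have := Nat.cast_nonneg (α := ℝ) p.2; linarith
  exact aux_core _ _ _ h1 h2 (one_le_pow₀ h2) hs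

private lemma bound_F (a b c : ℕ) (ha : 2 ≤ a) (hb : 2 ≤ b) (p : ℕ×ℕ) :
    Ffun a b c p ≤ 1/((p.1:ℝ)+1)^2 * (1/((p.2:ℝ)+1)^2) := by
  unfold Ffun
  rw [one_div_mul_one_div]
  apply one_div_le_one_div_of_le (by positivity)
  have h1 : (1:ℝ) ≤ (p.1:ℝ)+1 := by have := Nat.cast_nonneg (α := ℝ) p.1; linarith
  have h2 : (1:ℝ) ≤ (p.2:ℝ)+1 := by have := Nat.cast_nonneg (α := ℝ) p.2; linarith
  have h3 : (1:ℝ) ≤ (p.1:ℝ)+(p.2:ℝ)+2 := by linarith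
  calc ((p.1:ℝ)+1)^2 * ((p.2:ℝ)+1)^2 ≤ ((p.1:ℝ)+1)^a * ((p.2:ℝ)+1)^b :=
        mul_le_mul (pow_le_pow_right₀ h1 ha) (pow_le_pow_right₀ h2 hb)
          (by positivity) (by positivity)
    _ ≤ ((p.1:ℝ)+1)^a * ((p.2:ℝ)+1)^b * ((p.1:ℝ)+(p.2:ℝ)+2)^c :=
        le_mul_of_one_le_right (by positivity) (one_le_pow₀ h3)

private lemma G_nonneg (s t : ℕ) (p : ℕ×ℕ) : 0 ≤ Gfun s t p := by unfold Gfun; positivity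
private lemma H_nonneg (s t : ℕ) (p : ℕ×ℕ) : 0 ≤ Hfun s t p := by unfold Hfun; positivity
private lemma F_nonneg (a b c : ℕ) (p : ℕ×ℕ) : 0 ≤ Ffun a b c p := by unfold Ffun; positivity

private lemma marg (f : ℕ×ℕ → ℝ) (hf0 : ∀ p, 0 ≤ f p)
    (hfb : ∀ p, f p ≤ 1/((p.1:ℝ)+1)^2 * (1/((p.2:ℝ)+1)^2)) :
    ∀ m : ℕ, Summable fun n => f (m, n) := fun m =>
  Summable.of_nonneg_of_le (fun n => hf0 _) (fun n => hfb (m, n))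
    (base_sq.mul_left (1/((m:ℝ)+1)^2))

private lemma summable_G (s t : ℕ) (hs : 4 ≤ s) : Summable (Gfun s t) :=
  Summable.of_nonneg_of_le (G_nonneg s t) (bound_G s t hs) summable_base

private lemma summable_H (s t : ℕ) (hs : 4 ≤ s) : Summable (Hfun s t) :=
  Summable.of_nonneg_of_le (H_nonneg s t) (bound_H s t hs) summable_base

private lemma summable_F (a b c : ℕ) (ha : 2 ≤ a) (hb : 2 ≤ b) : Summable (Ffun a b c) :=
  Summable.of_nonneg_of_le (F_nonneg a b c) (bound_F a b c ha hb) summable_base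

private lemma tsum_G (s t : ℕ) (hs : 4 ≤ s) : ∑' p : ℕ×ℕ, Gfun s t p = doubleZeta s t := by
  rw [Summable.tsum_prod' (summable_G s t hs) (marg _ (G_nonneg s t) (bound_G s t hs))]
  rfl

private lemma tsum_H (s t : ℕ) (hs : 4 ≤ s) : ∑' p : ℕ×ℕ, Hfun s t p = doubleZeta s t := by
  have e1 : ∑' p : ℕ×ℕ, Hfun s t ((Equiv.prodComm ℕ ℕ) p) = ∑' p : ℕ×ℕ, Hfun s t p :=
    (Equiv.prodComm ℕ ℕ).tsum_eq (Hfun s t)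
  rw [← e1]
  have e2 : ∀ p : ℕ×ℕ, Hfun s t ((Equiv.prodComm ℕ ℕ) p) = Gfun s t p := by
    intro p
    unfold Hfun Gfun
    simp only [Equiv.prodComm_apply, Prod.fst_swap, Prod.snd_swap]
    rw [show ((p.2:ℝ)+(p.1:ℝ)+2) = ((p.1:ℝ)+(p.2:ℝ)+2) by ring]
  rw [tsum_congr e2]
  exact tsum_G s t hs

private lemma tsum_F (a b c : ℕ) (ha : 2 ≤ a) (hb : 2 ≤ b) :
    wittenSl3 a b c = ∑' p : ℕ×ℕ, Ffun a b c p :=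
  (Summable.tsum_prod' (summable_F a b c ha hb) (marg _ (F_nonneg a b c) (bound_F a b c ha hb))).symm

private lemma term_mul (x w : ℝ) (cc : ℝ) (k m n : ℕ) :
    (cc/(x^k * w^m)) * (1/w^n) = cc * (1/(w^(m+n) * x^k)) := by
  rw [div_mul_div_comm, mul_one, mul_one_div]
  congr 1
  rw [pow_add]
  ring

private lemma pointwise (A B c : ℕ) (p : ℕ×ℕ) :
    Ffun (A+1) (B+1) c p =
      (∑ i ∈ range (A+1), ((B+i).choose i : ℝ) * Gfun (B+1+i+c) (A+1-i) p) +
      ∑ i ∈ range (B+1), ((A+i).choose i : ℝ) * Hfun (A+1+i+c) (B+1-i) p := by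
  unfold Ffun Gfun Hfun
  have hx : ((p.1:ℝ)+1) ≠ 0 := by positivity
  have hy : ((p.2:ℝ)+1) ≠ 0 := by positivity
  have hs' : ((p.1:ℝ)+1) + ((p.2:ℝ)+1) ≠ 0 := by positivity
  have e0 : 1/(((p.1:ℝ)+1)^(A+1) * ((p.2:ℝ)+1)^(B+1) * ((p.1:ℝ)+(p.2:ℝ)+2)^c)
      = (1/(((p.1:ℝ)+1)^(A+1)*((p.2:ℝ)+1)^(B+1))) * (1/(((p.1:ℝ)+(p.2:ℝ)+2)^c)) := by
    rw [one_div_mul_one_div]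
  rw [e0, key _ _ hx hy hs' A B,
    show ((p.1:ℝ)+1) + ((p.2:ℝ)+1) = ((p.1:ℝ)+(p.2:ℝ)+2) by ring,
    add_mul, Finset.sum_mul, Finset.sum_mul]
  exact congrArg₂ (· + ·)
    (Finset.sum_congr rfl fun i _ => term_mul _ _ _ _ _ _)
    (Finset.sum_congr rfl fun i _ => term_mul _ _ _ _ _ _)

theorem wittenSl3_reduction (a b c : ℕ) (ha : 2 ≤ a) (hb : 2 ≤ b) (hc : 2 ≤ c) :
    wittenSl3 a b c =
      (∑ j ∈ Finset.Icc 1 a, (Nat.choose (a + b - j - 1) (b - 1) : ℝ) *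
        doubleZeta (a + b + c - j) j) +
      (∑ j ∈ Finset.Icc 1 b, (Nat.choose (a + b - j - 1) (a - 1) : ℝ) *
        doubleZeta (a + b + c - j) j) := by
  obtain ⟨A, rfl⟩ : ∃ A, a = A+1 := ⟨a-1, by omega⟩
  obtain ⟨B, rfl⟩ : ∃ B, b = B+1 := ⟨b-1, by omega⟩
  have hA : 1 ≤ A := by omega
  have hB : 1 ≤ B := by omega
  have hsG : ∀ i ∈ range (A+1), Summable (fun p : ℕ×ℕ => ((B+i).choose i : ℝ) * Gfun (B+1+i+c) (A+1-i) p) :=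
    fun i _ => (summable_G _ _ (by omega)).mul_left _
  have hsH : ∀ i ∈ range (B+1), Summable (fun p : ℕ×ℕ => ((A+i).choose i : ℝ) * Hfun (A+1+i+c) (B+1-i) p) :=
    fun i _ => (summable_H _ _ (by omega)).mul_left _
  calc wittenSl3 (A+1) (B+1) c = ∑' p : ℕ×ℕ, Ffun (A+1) (B+1) c p := tsum_F _ _ _ ha hb
    _ = ∑' p : ℕ×ℕ, ((∑ i ∈ range (A+1), ((B+i).choose i : ℝ) * Gfun (B+1+i+c) (A+1-i) p) +
          ∑ i ∈ range (B+1), ((A+i).choose i : ℝ) * Hfun (A+1+i+c) (B+1-i) p) :=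
        tsum_congr (pointwise A B c)
    _ = (∑' p : ℕ×ℕ, ∑ i ∈ range (A+1), ((B+i).choose i : ℝ) * Gfun (B+1+i+c) (A+1-i) p) +
          ∑' p : ℕ×ℕ, ∑ i ∈ range (B+1), ((A+i).choose i : ℝ) * Hfun (A+1+i+c) (B+1-i) p :=
        Summable.tsum_add (summable_sum hsG) (summable_sum hsH)
    _ = (∑ i ∈ range (A+1), ∑' p : ℕ×ℕ, ((B+i).choose i : ℝ) * Gfun (B+1+i+c) (A+1-i) p) +
          ∑ i ∈ range (B+1), ∑' p : ℕ×ℕ, ((A+i).choose i : ℝ) * Hfun (A+1+i+c) (B+1-i) p := by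
        rw [Summable.tsum_finsetSum hsG, Summable.tsum_finsetSum hsH]
    _ = (∑ i ∈ range (A+1), ((B+i).choose i : ℝ) * doubleZeta (B+1+i+c) (A+1-i)) +
          ∑ i ∈ range (B+1), ((A+i).choose i : ℝ) * doubleZeta (A+1+i+c) (B+1-i) := by
        refine congrArg₂ (· + ·) (Finset.sum_congr rfl fun i _ => ?_)
          (Finset.sum_congr rfl fun i _ => ?_)
        · rw [tsum_mul_left, tsum_G _ _ (by omega)]
        · rw [tsum_mul_left, tsum_H _ _ (by omega)]
    _ = (∑ j ∈ Finset.Icc 1 (A+1), ((A+1 + (B+1) - j - 1).choose (B+1-1) : ℝ) *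
          doubleZeta (A+1 + (B+1) + c - j) j) +
        ∑ j ∈ Finset.Icc 1 (B+1), ((A+1 + (B+1) - j - 1).choose (A+1-1) : ℝ) *
          doubleZeta (A+1 + (B+1) + c - j) j := by
        rw [icc_range (A+1), icc_range (B+1)]
        refine congrArg₂ (· + ·) (Finset.sum_congr rfl fun i hi => ?_)
          (Finset.sum_congr rfl fun i hi => ?_)
        · simp only [Finset.mem_range] at hi
          rw [show A+1+(B+1)-(A+1-i)-1 = B+i by omega, show B+1-1 = B by omega,
            show A+1+(B+1)+c-(A+1-i) = B+1+i+c by omega,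
            show (B+i).choose B = (B+i).choose i from by
              simpa using Nat.choose_symm (Nat.le_add_left i B)]
        · simp only [Finset.mem_range] at hi
          rw [show A+1+(B+1)-(B+1-i)-1 = A+i by omega, show A+1-1 = A by omega,
            show A+1+(B+1)+c-(B+1-i) = A+1+i+c by omega,
            show (A+i).choose A = (A+i).choose i from by
              simpa using Nat.choose_symm (Nat.le_add_left i A)]
end

section
/- For positive integers a, b, c, d, f with c, f ≥ 1 and all other exponents large enough for convergence, and positive integers n₁, n₂, n₃: 1/(n₁^a n₂^b n₃^c (n₁+n₂)^d (n₁+n₂+n₃)^f) = ∑_{i=1}^{c} C(c+f−i−1, f−1) (−1)^{c+i} / (n₁^a n₂^b n₃^i (n₁+n₂)^{c+d+f−i}) + ∑_{i=1}^{f} C(c+f−i−1, c−1) (−1)^{c} / (n₁^a n₂^b (n₁+n₂)^{c+d+f−i} (n₁+n₂+n₃)^i). -/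
open Finset in
lemma hYlem (X Y : ℝ) (h : X * Y = X - Y) (f : ℕ) :
    X * Y ^ (f + 1) = X - ∑ j ∈ range (f + 1), Y ^ (j + 1) := by
  induction f with
  | zero => simpa using h
  | succ f ih =>
    calc X * Y ^ (f + 1 + 1) = (X * Y ^ (f + 1)) * Y := by ring
    _ = (X - ∑ j ∈ range (f + 1), Y ^ (j + 1)) * Y := by rw [ih]
    _ = X * Y - ∑ j ∈ range (f + 1), Y ^ (j + 1 + 1) := by
        rw [sub_mul, Finset.sum_mul]
        congr 1
    _ = X - ∑ j ∈ range (f + 1 + 1), Y ^ (j + 1) := by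
        rw [h, Finset.sum_range_succ' (fun j => Y ^ (j + 1)) (f + 1)]
        ring

open Finset in
lemma hXlem (X Y : ℝ) (h : X * Y = X - Y) (c : ℕ) :
    X ^ (c + 1) * Y = (∑ j ∈ range (c + 1), (-1 : ℝ) ^ (c + j) * X ^ (j + 1))
      + (-1) ^ (c + 1) * Y := by
  induction c with
  | zero => simpa [sub_eq_add_neg] using h
  | succ c ih =>
    calc X ^ (c + 1 + 1) * Y = X * (X ^ (c + 1) * Y) := by ring
    _ = X * ((∑ j ∈ range (c + 1), (-1 : ℝ) ^ (c + j) * X ^ (j + 1)) + (-1) ^ (c + 1) * Y) := by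
        rw [ih]
    _ = (∑ j ∈ range (c + 1), (-1 : ℝ) ^ (c + 1 + (j + 1)) * X ^ (j + 1 + 1))
        + (-1) ^ (c + 1) * (X * Y) := by
        rw [mul_add, Finset.mul_sum]
        congr 1
        · refine Finset.sum_congr rfl (fun j _ => ?_)
          have : ((-1 : ℝ)) ^ (c + 1 + (j + 1)) = (-1) ^ (c + j) := by
            rw [show c + 1 + (j + 1) = c + j + 2 by omega, pow_add]; norm_num
          rw [this]; ring
        · ring
    _ = (∑ j ∈ range (c + 1 + 1), (-1 : ℝ) ^ (c + 1 + j) * X ^ (j + 1)) + (-1) ^ (c + 1 + 1) * Y := by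
        rw [h, Finset.sum_range_succ' (fun j => (-1 : ℝ) ^ (c + 1 + j) * X ^ (j + 1)) (c + 1)]
        ring

open Finset in
lemma core (X Y : ℝ) (h : X * Y = X - Y) : ∀ c f : ℕ,
    X ^ (c + 1) * Y ^ (f + 1) =
      (∑ j ∈ range (c + 1), ((c + f - j).choose f : ℝ) * (-1) ^ (c + j) * X ^ (j + 1))
      + (∑ j ∈ range (f + 1), ((c + f - j).choose c : ℝ) * (-1) ^ (c + 1) * Y ^ (j + 1)) := by
  intro c
  induction c with
  | zero =>
    intro f
    have e1 : ∑ j ∈ range (0 + 1), ((0 + f - j).choose f : ℝ) * (-1) ^ (0 + j) * X ^ (j + 1)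
        = X := by simp
    have e2 : ∑ j ∈ range (f + 1), ((0 + f - j).choose 0 : ℝ) * (-1) ^ (0 + 1) * Y ^ (j + 1)
        = -∑ j ∈ range (f + 1), Y ^ (j + 1) := by
      rw [← Finset.sum_neg_distrib]
      exact Finset.sum_congr rfl (fun j _ => by simp)
    rw [e1, e2, pow_one, hYlem X Y h f]
    ring
  | succ c ihc =>
    intro f
    induction f with
    | zero =>
      have e1 : ∑ j ∈ range (c + 1 + 1), ((c + 1 + 0 - j).choose 0 : ℝ) * (-1) ^ (c + 1 + j) * X ^ (j + 1)
          = ∑ j ∈ range (c + 1 + 1), (-1 : ℝ) ^ (c + 1 + j) * X ^ (j + 1) := by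
        exact Finset.sum_congr rfl (fun j _ => by simp)
      have e2 : ∑ j ∈ range (0 + 1), ((c + 1 + 0 - j).choose (c + 1) : ℝ) * (-1) ^ (c + 1 + 1) * Y ^ (j + 1)
          = (-1) ^ (c + 1 + 1) * Y := by simp
      rw [e1, e2, pow_one, hXlem X Y h (c + 1)]
    | succ f ihf =>
      have key : X ^ (c + 1 + 1) * Y ^ (f + 1 + 1)
          = X ^ (c + 1 + 1) * Y ^ (f + 1) - X ^ (c + 1) * Y ^ (f + 1 + 1) := by
        calc X ^ (c + 1 + 1) * Y ^ (f + 1 + 1) = X ^ (c + 1) * Y ^ (f + 1) * (X * Y) := by ring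
        _ = X ^ (c + 1) * Y ^ (f + 1) * (X - Y) := by rw [h]
        _ = _ := by ring
      rw [key, ihf, ihc (f + 1)]
      -- extend the two shorter sums
      have eA : ∑ j ∈ range (c + 1 + 1), ((c + (f + 1) - j).choose (f + 1) : ℝ) * (-1) ^ (c + j) * X ^ (j + 1)
          = ∑ j ∈ range (c + 1), ((c + (f + 1) - j).choose (f + 1) : ℝ) * (-1) ^ (c + j) * X ^ (j + 1) := by
        rw [Finset.sum_range_succ]
        have : (c + (f + 1) - (c + 1)).choose (f + 1) = 0 :=
          Nat.choose_eq_zero_of_lt (by omega)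
        simp [this]
      have eB : ∑ j ∈ range (f + 1 + 1), ((c + 1 + f - j).choose (c + 1) : ℝ) * (-1) ^ (c + 1 + 1) * Y ^ (j + 1)
          = ∑ j ∈ range (f + 1), ((c + 1 + f - j).choose (c + 1) : ℝ) * (-1) ^ (c + 1 + 1) * Y ^ (j + 1) := by
        rw [Finset.sum_range_succ]
        have : (c + 1 + f - (f + 1)).choose (c + 1) = 0 :=
          Nat.choose_eq_zero_of_lt (by omega)
        simp [this]
      rw [← eA, ← eB, add_sub_add_comm, ← Finset.sum_sub_distrib, ← Finset.sum_sub_distrib]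
      congr 1
      · refine Finset.sum_congr rfl (fun j hj => ?_)
        have hj' : j ≤ c + 1 := by simpa [Nat.lt_succ_iff] using hj
        have e1 : (c + 1 + (f + 1) - j).choose (f + 1)
            = (c + 1 + f - j).choose f + (c + (f + 1) - j).choose (f + 1) := by
          have h3 : c + 1 + (f + 1) - j = (c + f + 1 - j) + 1 := by omega
          have h4 : c + 1 + f - j = c + f + 1 - j := by omega
          have h5 : c + (f + 1) - j = c + f + 1 - j := by omega
          rw [h3, h4, h5, Nat.choose_succ_succ']
        rw [e1]
        push_cast
        ring
      · refine Finset.sum_congr rfl (fun j hj => ?_)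
        have hj' : j ≤ f + 1 := by simpa [Nat.lt_succ_iff] using hj
        have e1 : (c + 1 + (f + 1) - j).choose (c + 1)
            = (c + 1 + f - j).choose (c + 1) + (c + (f + 1) - j).choose c := by
          have h3 : c + 1 + (f + 1) - j = (c + f + 1 - j) + 1 := by omega
          have h4 : c + 1 + f - j = c + f + 1 - j := by omega
          have h5 : c + (f + 1) - j = c + f + 1 - j := by omega
          rw [h3, h4, h5, Nat.choose_succ_succ]
          exact Nat.add_comm _ _
        rw [e1]
        push_cast
        ring

theorem pointwise_partial_fraction (a b c d f : ℕ)
    (ha : 1 ≤ a) (hb : 1 ≤ b) (hc : 1 ≤ c) (hd : 1 ≤ d) (hf : 1 ≤ f)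
    (n₁ n₂ n₃ : ℕ) (hn₁ : 1 ≤ n₁) (hn₂ : 1 ≤ n₂) (hn₃ : 1 ≤ n₃) :
    1 / ((n₁ : ℝ) ^ a * (n₂ : ℝ) ^ b * (n₃ : ℝ) ^ c * ((n₁ : ℝ) + n₂) ^ d *
        ((n₁ : ℝ) + n₂ + n₃) ^ f) =
      (∑ i ∈ Finset.Icc 1 c, (Nat.choose (c + f - i - 1) (f - 1) : ℝ) * (-1) ^ (c + i) /
        ((n₁ : ℝ) ^ a * (n₂ : ℝ) ^ b * (n₃ : ℝ) ^ i * ((n₁ : ℝ) + n₂) ^ (c + d + f - i))) +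
      (∑ i ∈ Finset.Icc 1 f, (Nat.choose (c + f - i - 1) (c - 1) : ℝ) * (-1) ^ c /
        ((n₁ : ℝ) ^ a * (n₂ : ℝ) ^ b * ((n₁ : ℝ) + n₂) ^ (c + d + f - i) *
          ((n₁ : ℝ) + n₂ + n₃) ^ i)) := by
  obtain ⟨c', rfl⟩ : ∃ k, c = k + 1 := ⟨c - 1, by omega⟩
  obtain ⟨f', rfl⟩ : ∃ k, f = k + 1 := ⟨f - 1, by omega⟩
  have h1 : (0 : ℝ) < n₁ := by exact_mod_cast Nat.lt_of_lt_of_le Nat.zero_lt_one hn₁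
  have h2 : (0 : ℝ) < n₂ := by exact_mod_cast Nat.lt_of_lt_of_le Nat.zero_lt_one hn₂
  have h3 : (0 : ℝ) < n₃ := by exact_mod_cast Nat.lt_of_lt_of_le Nat.zero_lt_one hn₃
  have hm : ((n₁ : ℝ) + n₂) ≠ 0 := by positivity
  have hx : ((n₃ : ℝ)) ≠ 0 := ne_of_gt h3
  have hy : ((n₁ : ℝ) + n₂ + n₃) ≠ 0 := by positivity
  have hA1 : ((n₁ : ℝ)) ≠ 0 := ne_of_gt h1
  have hA2 : ((n₂ : ℝ)) ≠ 0 := ne_of_gt h2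
  set M : ℝ := (n₁ : ℝ) + n₂ with hM
  set X : ℝ := M / n₃ with hX
  set Y : ℝ := M / ((n₁ : ℝ) + n₂ + n₃) with hY
  have hrel : X * Y = X - Y := by
    rw [hX, hY]
    field_simp
    ring
  have hcore := core X Y hrel c' f'
  set D : ℝ := (n₁ : ℝ) ^ a * (n₂ : ℝ) ^ b * M ^ (c' + d + f' + 2) with hD
  have hDne : D ≠ 0 := by
    rw [hD]; positivity
  rw [← Finset.Ico_add_one_right_eq_Icc 1 (c'+1), ← Finset.Ico_add_one_right_eq_Icc 1 (f'+1), Finset.sum_Ico_eq_sum_range, Finset.sum_Ico_eq_sum_range]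
  have hr1 : c' + 1 + 1 - 1 = c' + 1 := by omega
  have hr2 : f' + 1 + 1 - 1 = f' + 1 := by omega
  rw [hr1, hr2]
  calc 1 / ((n₁ : ℝ) ^ a * (n₂ : ℝ) ^ b * (n₃ : ℝ) ^ (c' + 1) * M ^ d *
        ((n₁ : ℝ) + n₂ + n₃) ^ (f' + 1))
      = (X ^ (c' + 1) * Y ^ (f' + 1)) / D := by
        rw [hX, hY, hD, div_pow, div_pow]
        rw [show M ^ (c' + d + f' + 2) = M ^ (c' + 1) * M ^ (f' + 1) * M ^ d by
          rw [← pow_add, ← pow_add]; congr 1; omega]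
        field_simp
    _ = ((∑ j ∈ Finset.range (c' + 1), ((c' + f' - j).choose f' : ℝ) * (-1) ^ (c' + j) * X ^ (j + 1))
        + (∑ j ∈ Finset.range (f' + 1), ((c' + f' - j).choose c' : ℝ) * (-1) ^ (c' + 1) * Y ^ (j + 1))) / D := by
        rw [hcore]
    _ = _ := by
        rw [add_div, Finset.sum_div, Finset.sum_div]
        congr 1
        · refine Finset.sum_congr rfl (fun j hj => ?_)
          have hjc : j ≤ c' := by simpa [Nat.lt_succ_iff] using hj
          have e1 : c' + 1 + (f' + 1) - (1 + j) - 1 = c' + f' - j := by omega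
          have e2 : f' + 1 - 1 = f' := by omega
          have e3 : c' + 1 + d + (f' + 1) - (1 + j) = c' + d + f' + 1 - j := by omega
          have e4 : ((-1 : ℝ)) ^ (c' + 1 + (1 + j)) = (-1) ^ (c' + j) := by
            rw [show c' + 1 + (1 + j) = c' + j + 2 by omega, pow_add]; norm_num
          rw [e1, e2, e3, e4, hX, hD, div_pow]
          rw [show M ^ (c' + d + f' + 2) = M ^ (c' + d + f' + 1 - j) * M ^ (1 + j) by
            rw [← pow_add]; congr 1; omega]
          rw [show (n₃ : ℝ) ^ (1 + j) = (n₃ : ℝ) ^ (j + 1) by ring]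
          field_simp
          ring
        · refine Finset.sum_congr rfl (fun j hj => ?_)
          have hjf : j ≤ f' := by simpa [Nat.lt_succ_iff] using hj
          have e1 : c' + 1 + (f' + 1) - (1 + j) - 1 = c' + f' - j := by omega
          have e2 : c' + 1 - 1 = c' := by omega
          have e3 : c' + 1 + d + (f' + 1) - (1 + j) = c' + d + f' + 1 - j := by omega
          rw [e1, e2, e3, hY, hD, div_pow]
          rw [show M ^ (c' + d + f' + 2) = M ^ (c' + d + f' + 1 - j) * M ^ (1 + j) by
            rw [← pow_add]; congr 1; omega]
          rw [show ((n₁ : ℝ) + n₂ + n₃) ^ (1 + j) = ((n₁ : ℝ) + n₂ + n₃) ^ (j + 1) by ring]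
          field_simp
          ring
end
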